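/- arXiv:0901.1340 — 3 statements merged into one kernel-verified Lean document; each statement's English description precedes it below -/
import Mathlib

section
/- Let N = p^m be a prime power and let f : (ℤ/Nℤ)* → (ℤ/p^{m-i}ℤ)* be the group homomorphism induced by the ring reduction map, where 1 ≤ i ≤ m-1. Then the stabilizer of the element [p^i] ∈ ℤ/Nℤ under the multiplication action of (ℤ/Nℤ)* equals the kernel of f. -/
/-- For `N = p^m` a prime power (`m ≥ 2`) and `1 ≤ i ≤ m-1`, the stabilizer of
`[p^i] ∈ ℤ/Nℤ` under the multiplication action of `(ℤ/Nℤ)ˣ` equals the kernel of the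
homomorphism `(ℤ/p^mℤ)ˣ → (ℤ/p^(m-i)ℤ)ˣ` induced by the ring reduction map. -/
theorem stmt0 (p m i : ℕ) (hp : p.Prime) (hm : 2 ≤ m) (hi1 : 1 ≤ i) (hi2 : i ≤ m - 1) :
    MulAction.stabilizer (ZMod (p ^ m))ˣ ((p : ZMod (p ^ m)) ^ i) =
      (Units.map (ZMod.castHom (pow_dvd_pow p (by omega : m - i ≤ m))
        (ZMod (p ^ (m - i)))).toMonoidHom).ker := by
  have hp0 : (p : ℤ) ≠ 0 := by exact_mod_cast hp.pos.ne'
  have hne : (p : ℤ) ^ i ≠ 0 := pow_ne_zero _ hp0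
  ext u
  rw [MulAction.mem_stabilizer_iff, MonoidHom.mem_ker, Units.smul_def, smul_eq_mul]
  obtain ⟨a, ha⟩ := ZMod.intCast_surjective (u : ZMod (p ^ m))
  have key : ((u : ZMod (p ^ m)) * (p : ZMod (p ^ m)) ^ i = (p : ZMod (p ^ m)) ^ i)
      ↔ ((a : ℤ) - 1) % (p : ℤ) ^ (m - i) = 0 := by
    rw [← ha]
    constructor
    · intro h
      have h' : (((a * p ^ i : ℤ)) : ZMod (p ^ m)) = (((p : ℤ) ^ i : ℤ) : ZMod (p ^ m)) := by
        push_cast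
        exact h
      rw [ZMod.intCast_eq_intCast_iff] at h'
      have hdvd : ((p : ℤ) ^ m) ∣ (a - 1) * (p : ℤ) ^ i := by
        have h2 := (Int.ModEq.dvd h')
        have heq : (p ^ i : ℤ) - a * p ^ i = -((a - 1) * p ^ i) := by ring
        rw [heq] at h2
        have h3 : ((p ^ m : ℕ) : ℤ) ∣ (a - 1) * (p : ℤ) ^ i := (dvd_neg.mp h2)
        exact_mod_cast h3
      have hsplit : (p : ℤ) ^ m = (p : ℤ) ^ (m - i) * (p : ℤ) ^ i := by
        rw [← pow_add]; congr 1; omega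
      rw [hsplit] at hdvd
      exact Int.emod_eq_zero_of_dvd ((mul_dvd_mul_iff_right hne).mp hdvd)
    · intro h
      have hdvd : ((p : ℤ) ^ (m - i)) ∣ (a - 1) := Int.dvd_of_emod_eq_zero h
      have hdvd2 : ((p : ℤ) ^ m) ∣ (a - 1) * (p : ℤ) ^ i := by
        have hsplit : (p : ℤ) ^ m = (p : ℤ) ^ (m - i) * (p : ℤ) ^ i := by
          rw [← pow_add]; congr 1; omega
        rw [hsplit]
        exact mul_dvd_mul_right hdvd _
      have h' : (((a * p ^ i : ℤ)) : ZMod (p ^ m)) = (((p ^ i : ℤ)) : ZMod (p ^ m)) := by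
        rw [ZMod.intCast_eq_intCast_iff]
        have : (p ^ i : ℤ) - a * p ^ i = -((a - 1) * p ^ i) := by ring
        exact (Int.modEq_iff_dvd.mpr (by rw [this]; exact dvd_neg.mpr (by exact_mod_cast hdvd2)))
      push_cast at h'
      exact h'
  have key2 : ((Units.map (ZMod.castHom (pow_dvd_pow p (by omega : m - i ≤ m))
        (ZMod (p ^ (m - i)))).toMonoidHom) u = 1)
      ↔ ((a : ℤ) - 1) % (p : ℤ) ^ (m - i) = 0 := by
    rw [Units.ext_iff]
    simp only [Units.coe_map, Units.val_one, RingHom.toMonoidHom_eq_coe,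
      MonoidHom.coe_coe]
    rw [← ha, map_intCast]
    constructor
    · intro h
      have : (((a - 1 : ℤ)) : ZMod (p ^ (m - i))) = 0 := by push_cast; rw [h]; ring
      rw [ZMod.intCast_zmod_eq_zero_iff_dvd] at this
      exact Int.emod_eq_zero_of_dvd (by exact_mod_cast this)
    · intro h
      have hdvd : ((p : ℤ) ^ (m - i)) ∣ (a - 1) := Int.dvd_of_emod_eq_zero h
      have : (((a - 1 : ℤ)) : ZMod (p ^ (m - i))) = 0 := by
        rw [ZMod.intCast_zmod_eq_zero_iff_dvd]; exact_mod_cast hdvd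
      push_cast at this
      linear_combination this
  rw [key, key2]
end

section
/- Let N = p^m be a prime power. The following set is a complete set of orbit representatives for the scaling action of (ℤ/Nℤ)* on the set 𝕐_N of unimodular pairs in (ℤ/Nℤ)²: all pairs (a,b) with either (a,b) = ([0],[1]); or a = [1] and b arbitrary in ℤ/Nℤ; or a = [p^i] for some 1 ≤ i ≤ m-1 and b = [b̄] with 1 ≤ b̄ ≤ p^{m-i} and gcd(b̄, p) = 1. That is, every unimodular pair lies in the same orbit as exactly one pair from this set. -/
/-- A pair in `(ℤ/Nℤ)²` is unimodular if it admits integer lifts `ā, b̄` with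
`gcd(ā, b̄, N) = 1`. -/
def Unimodular (N : ℕ) (v : ZMod N × ZMod N) : Prop :=
  ∃ A B : ℤ, (A : ZMod N) = v.1 ∧ (B : ZMod N) = v.2 ∧
    Int.gcd (Int.gcd A B) (N : ℤ) = 1

/-- The distinguished set of orbit representatives for the scaling action of `(ℤ/p^mℤ)ˣ`
on unimodular pairs: `([0],[1])`; `([1], b)` with `b` arbitrary; and `([p^i], [b̄])` with
`1 ≤ i ≤ m-1`, `1 ≤ b̄ ≤ p^(m-i)` and `gcd(b̄, p) = 1`. -/
def IsRep (p m : ℕ) (w : ZMod (p ^ m) × ZMod (p ^ m)) : Prop :=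
  w = (0, 1) ∨ w.1 = 1 ∨
    ∃ i b : ℕ, 1 ≤ i ∧ i ≤ m - 1 ∧ 1 ≤ b ∧ b ≤ p ^ (m - i) ∧ Nat.Coprime b p ∧
      w.1 = (p : ZMod (p ^ m)) ^ i ∧ w.2 = (b : ZMod (p ^ m))

lemma pow_p_eq_zero_iff (p m : ℕ) (hp : p.Prime) (k : ℕ) :
    ((p : ZMod (p^m)) ^ k = 0) ↔ m ≤ k := by
  rw [← Nat.cast_pow, ZMod.natCast_eq_zero_iff,
    Nat.pow_dvd_pow_iff_le_right hp.one_lt]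

lemma p_not_unit (p m : ℕ) (hp : p.Prime) (hm : 1 ≤ m) : ¬ IsUnit (p : ZMod (p^m)) := by
  haveI : NeZero (p^m) := ⟨pow_ne_zero _ hp.pos.ne'⟩
  rw [ZMod.isUnit_iff_coprime, Nat.Prime.coprime_iff_not_dvd hp]
  exact fun h => h (dvd_pow_self p (Nat.one_le_iff_ne_zero.mp hm))

-- L3
lemma annihilator_dvd (p m i : ℕ) (hp : p.Prime) (hi : i ≤ m) (x : ZMod (p^m))
    (hx : x * (p : ZMod (p^m))^i = 0) : p^(m-i) ∣ x.val := by
  haveI : NeZero (p^m) := ⟨pow_ne_zero _ hp.pos.ne'⟩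
  have h : ((x.val * p^i : ℕ) : ZMod (p^m)) = 0 := by
    push_cast
    rw [ZMod.natCast_zmod_val]
    exact hx
  rw [ZMod.natCast_eq_zero_iff] at h
  have h' : p ^ (m-i) * p^i ∣ x.val * p^i := by
    rw [← pow_add, show m - i + i = m by omega]; exact h
  exact (Nat.mul_dvd_mul_iff_right (pow_pos hp.pos i)).mp h'

-- unit casts of coprime naturals
lemma isUnit_coprime (p m c : ℕ) (hp : p.Prime) (hc : Nat.Coprime c p) :
    IsUnit ((c : ℕ) : ZMod (p^m)) := by
  haveI : NeZero (p^m) := ⟨pow_ne_zero _ hp.pos.ne'⟩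
  rw [ZMod.isUnit_iff_coprime]
  exact hc.pow_right m

-- L4 decomposition
lemma decomp (p m : ℕ) (hp : p.Prime) (hm : 1 ≤ m) (a : ZMod (p^m))
    (ha0 : a ≠ 0) (hau : ¬ IsUnit a) :
    ∃ i c : ℕ, 1 ≤ i ∧ i ≤ m - 1 ∧ Nat.Coprime c p ∧
      a = (p : ZMod (p^m))^i * (c : ZMod (p^m)) := by
  haveI : NeZero (p^m) := ⟨pow_ne_zero _ hp.pos.ne'⟩
  set n := a.val with hn
  have hcast : ((n : ℕ) : ZMod (p^m)) = a := ZMod.natCast_zmod_val a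
  have hn0 : n ≠ 0 := by
    intro h
    apply ha0
    rw [← hcast, h, Nat.cast_zero]
  have hpn : p ∣ n := by
    by_contra hpd
    exact hau (by
      rw [← hcast, ZMod.isUnit_iff_coprime]
      exact (Nat.Prime.coprime_iff_not_dvd hp).mpr hpd |>.symm.pow_right m)
  refine ⟨n.factorization p, ordCompl[p] n, ?_, ?_, ?_, ?_⟩
  · exact (Nat.Prime.factorization_pos_of_dvd hp hn0 hpn)
  · have hdvd : p ^ (n.factorization p) ∣ n := Nat.ordProj_dvd n p
    have hlt : n < p^m := a.val_lt
    have : p ^ (n.factorization p) < p ^ m := lt_of_le_of_lt (Nat.le_of_dvd (Nat.pos_of_ne_zero hn0) hdvd) hlt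
    have := (Nat.pow_lt_pow_iff_right hp.one_lt).mp this
    omega
  · exact (Nat.coprime_ordCompl hp hn0).symm
  · have h2 : a = ((p ^ (n.factorization p) * ordCompl[p] n : ℕ) : ZMod (p^m)) := by
      rw [Nat.ordProj_mul_ordCompl_eq_self n p, hcast]
    rw [h2]
    push_cast
    ring
-- unimodular => unit
lemma unimod_unit (p m : ℕ) (hp : p.Prime) (hm : 1 ≤ m)
    (v : ZMod (p^m) × ZMod (p^m)) (hv : Unimodular (p^m) v) :
    IsUnit v.1 ∨ IsUnit v.2 := by
  haveI : NeZero (p^m) := ⟨pow_ne_zero _ hp.pos.ne'⟩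
  obtain ⟨A, B, hA, hB, hg⟩ := hv
  have key : ∀ C : ℤ, ¬ p ∣ C.natAbs → IsUnit ((C : ℤ) : ZMod (p^m)) := by
    intro C hC
    have hU : IsUnit ((C.natAbs : ℕ) : ZMod (p^m)) :=
      isUnit_coprime p m _ hp ((Nat.Prime.coprime_iff_not_dvd hp).mpr hC).symm
    rcases Int.natAbs_eq C with h | h
    · rw [h, Int.cast_natCast]; exact hU
    · rw [h, Int.cast_neg, Int.cast_natCast]; exact hU.neg
  have hg' : Nat.Coprime (Int.gcd A B) (p^m) := by
    rwa [show ((p^m : ℕ) : ℤ) = ((p^m : ℕ) : ℤ) from rfl, Int.gcd_natCast_natCast] at hg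
  have hnd : ¬ p ∣ Int.gcd A B := by
    intro hd
    have : p ∣ 1 := hg' ▸ Nat.dvd_gcd hd (dvd_pow_self p (Nat.one_le_iff_ne_zero.mp hm))
    exact hp.one_lt.ne' (Nat.le_antisymm (Nat.le_of_dvd one_pos this) hp.one_lt.le ▸ rfl)
  by_cases hpa : p ∣ A.natAbs
  · right
    rw [← hB]
    refine key B fun hpb => hnd ?_
    exact Nat.dvd_gcd hpa hpb
  · left; rw [← hA]; exact key A hpa

-- valuation comparison
lemma val_le (p m : ℕ) (hp : p.Prime) (hm : 1 ≤ m) (i j : ℕ) (hj : j ≤ m - 1)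
    (u : (ZMod (p^m))ˣ) (h : (p : ZMod (p^m))^j = ↑u * (p : ZMod (p^m))^i) : i ≤ j := by
  by_contra hlt
  push_neg at hlt
  have h1 : (p : ZMod (p^m))^(j + (m-1-j)) = ↑u * (p : ZMod (p^m))^(i + (m-1-j)) := by
    rw [pow_add, pow_add, h, mul_assoc]
  rw [show j + (m-1-j) = m - 1 by omega,
    (pow_p_eq_zero_iff p m hp (i + (m-1-j))).mpr (by omega), mul_zero] at h1
  exact absurd ((pow_p_eq_zero_iff p m hp _).mp h1) (by omega)

-- second-coordinate equality
lemma b_eq (p m i : ℕ) (hp : p.Prime) (hm : 1 ≤ m) (hi1 : 1 ≤ i) (him : i ≤ m - 1)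
    (b₁ b₂ : ℕ) (hb₁ : 1 ≤ b₁) (hb₁' : b₁ ≤ p^(m-i)) (hc₁ : Nat.Coprime b₁ p)
    (hb₂ : 1 ≤ b₂) (hb₂' : b₂ ≤ p^(m-i)) (hc₂ : Nat.Coprime b₂ p)
    (u : (ZMod (p^m))ˣ)
    (hu : ↑u * (p : ZMod (p^m))^i = (p : ZMod (p^m))^i)
    (he : (b₂ : ZMod (p^m)) = ↑u * (b₁ : ZMod (p^m))) : b₁ = b₂ := by
  haveI : NeZero (p^m) := ⟨pow_ne_zero _ hp.pos.ne'⟩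
  have hx : ((↑u - 1 : ZMod (p^m))) * (p : ZMod (p^m))^i = 0 := by
    rw [sub_mul, one_mul, hu, sub_self]
  have hdvd := annihilator_dvd p m i hp (by omega) _ hx
  have hd2 : (p:ℕ)^(m-i) ∣ p^m := pow_dvd_pow p (by omega)
  let φ : ZMod (p^m) →+* ZMod (p^(m-i)) := ZMod.castHom hd2 _
  have hφu : φ ↑u = 1 := by
    have h0 : φ (↑u - 1) = 0 := by
      rw [← ZMod.natCast_zmod_val (↑u - 1 : ZMod (p^m)), map_natCast,
        ZMod.natCast_eq_zero_iff]
      exact hdvd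
    have h1 : φ ↑u - 1 = 0 := by rw [← map_one φ, ← map_sub]; exact h0
    exact sub_eq_zero.mp h1
  have he2 : ((b₂ : ℕ) : ZMod (p^(m-i))) = ((b₁ : ℕ) : ZMod (p^(m-i))) := by
    have := congrArg φ he
    rwa [map_natCast, map_mul, hφu, one_mul, map_natCast] at this
  have hmod : b₂ ≡ b₁ [MOD p^(m-i)] := (ZMod.natCast_eq_natCast_iff _ _ _).mp he2
  have hplt : p ∣ p^(m-i) := dvd_pow_self p (by omega)
  have hlt₁ : b₁ < p^(m-i) := by
    rcases lt_or_eq_of_le hb₁' with h | h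
    · exact h
    · exact absurd (h ▸ hplt) ((Nat.Prime.coprime_iff_not_dvd hp).mp hc₁.symm)
  have hlt₂ : b₂ < p^(m-i) := by
    rcases lt_or_eq_of_le hb₂' with h | h
    · exact h
    · exact absurd (h ▸ hplt) ((Nat.Prime.coprime_iff_not_dvd hp).mp hc₂.symm)
  have := hmod.symm
  unfold Nat.ModEq at this
  rwa [Nat.mod_eq_of_lt hlt₁, Nat.mod_eq_of_lt hlt₂] at this

lemma rep_unique (p m : ℕ) (hp : p.Prime) (hm : 1 ≤ m)
    (w₁ w₂ : ZMod (p^m) × ZMod (p^m)) (h₁ : IsRep p m w₁) (h₂ : IsRep p m w₂)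
    (u : (ZMod (p^m))ˣ) (e1 : w₂.1 = ↑u * w₁.1) (e2 : w₂.2 = ↑u * w₁.2) :
    w₂ = w₁ := by
  haveI : NeZero (p^m) := ⟨pow_ne_zero _ hp.pos.ne'⟩
  haveI : Fact (1 < p^m) := ⟨Nat.one_lt_pow (Nat.one_le_iff_ne_zero.mp hm) hp.one_lt⟩
  have e1' : w₁.1 = ↑u⁻¹ * w₂.1 := by rw [e1, Units.inv_mul_cancel_left]
  have e2' : w₁.2 = ↑u⁻¹ * w₂.2 := by rw [e2, Units.inv_mul_cancel_left]
  -- impossibility pieces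
  have zero_one : ∀ (y : ZMod (p^m) × ZMod (p^m)) (v : (ZMod (p^m))ˣ),
      y.1 = 1 → y.1 = ↑v * 0 → False := by
    intro y v hy h
    rw [mul_zero, hy] at h
    exact one_ne_zero h
  have zero_pow : ∀ (i : ℕ), 1 ≤ i → i ≤ m - 1 → ∀ (v : (ZMod (p^m))ˣ),
      (p : ZMod (p^m))^i = ↑v * 0 → False := by
    intro i hi1 hi2 v h
    rw [mul_zero] at h
    have := (pow_p_eq_zero_iff p m hp i).mp h
    omega
  have one_pow : ∀ (i : ℕ), 1 ≤ i → i ≤ m - 1 → ∀ (v : (ZMod (p^m))ˣ),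
      (p : ZMod (p^m))^i = ↑v * 1 → False := by
    intro i hi1 hi2 v h
    rw [mul_one] at h
    have hiu : IsUnit ((p : ZMod (p^m))^i) := h ▸ v.isUnit
    rw [show i = 1 + (i-1) by omega, pow_add, pow_one] at hiu
    exact p_not_unit p m hp hm (isUnit_of_mul_isUnit_left hiu)
  rcases h₁ with hw₁ | hw₁ | ⟨i, b₁, hi1, hi2, hb1, hb1', hbc1, ha₁, hb₁⟩ <;>
    rcases h₂ with hw₂ | hw₂ | ⟨j, b₂, hj1, hj2, hb2, hb2', hbc2, ha₂, hb₂⟩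
  · rw [hw₁, hw₂]
  · exfalso
    have h10 : (1 : ZMod (p^m)) = 0 := by rw [← hw₂, e1, hw₁, mul_zero]
    exact one_ne_zero h10
  · exact (zero_pow j hj1 hj2 u (by rw [← ha₂, e1, hw₁])).elim
  · exfalso
    have h10 : (1 : ZMod (p^m)) = 0 := by rw [← hw₁, e1', hw₂, mul_zero]
    exact one_ne_zero h10
  · have hu : (u : ZMod (p^m)) = 1 := by rw [hw₂, hw₁, mul_one] at e1; exact e1.symm
    have : w₂.2 = w₁.2 := by rw [e2, hu, one_mul]
    exact Prod.ext (by rw [hw₂, hw₁]) this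
  · exact (one_pow j hj1 hj2 u (by rw [← ha₂, e1, hw₁])).elim
  · exact (zero_pow i hi1 hi2 u⁻¹ (by rw [← ha₁, e1', hw₂])).elim
  · exact (one_pow i hi1 hi2 u⁻¹ (by rw [← ha₁, e1', hw₂])).elim
  · -- both p-power case
    have hji : (p : ZMod (p^m))^j = ↑u * (p : ZMod (p^m))^i := by rw [← ha₂, e1, ha₁]
    have hij : (p : ZMod (p^m))^i = ↑u⁻¹ * (p : ZMod (p^m))^j := by rw [← ha₁, e1', ha₂]
    have hije : i = j := le_antisymm (val_le p m hp hm i j hj2 u hji) (val_le p m hp hm j i hi2 u⁻¹ hij)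
    subst hije
    have hu : ↑u * (p : ZMod (p^m))^i = (p : ZMod (p^m))^i := hji.symm
    have hbe : b₁ = b₂ :=
      b_eq p m i hp hm hi1 hi2 b₁ b₂ hb1 hb1' hbc1 hb2 hb2' hbc2 u hu (by rw [← hb₂, e2, hb₁])
    exact Prod.ext (by rw [ha₂, ha₁]) (by rw [hb₂, hb₁, hbe])

/-- for `N = p^m`, the set `IsRep` is a complete set of orbit representatives
for the scaling action of `(ℤ/Nℤ)ˣ` on the set of unimodular pairs: every unimodular pair
lies in the same orbit as exactly one representative. -/
theorem stmt8 (p m : ℕ) (hp : p.Prime) (hm : 1 ≤ m) :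
    ∀ v : ZMod (p ^ m) × ZMod (p ^ m), Unimodular (p ^ m) v →
      ∃! w : ZMod (p ^ m) × ZMod (p ^ m), IsRep p m w ∧
        ∃ u : (ZMod (p ^ m))ˣ,
          w.1 = (u : ZMod (p ^ m)) * v.1 ∧ w.2 = (u : ZMod (p ^ m)) * v.2 := by
  haveI : NeZero (p^m) := ⟨pow_ne_zero _ hp.pos.ne'⟩
  intro v hv
  have hex : ∃ w : ZMod (p ^ m) × ZMod (p ^ m), IsRep p m w ∧
      ∃ u : (ZMod (p ^ m))ˣ, w.1 = ↑u * v.1 ∧ w.2 = ↑u * v.2 := by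
    by_cases hu1 : IsUnit v.1
    · refine ⟨(1, ↑hu1.unit⁻¹ * v.2), Or.inr (Or.inl rfl), hu1.unit⁻¹, ?_, rfl⟩
      show (1 : ZMod (p^m)) = ↑hu1.unit⁻¹ * v.1
      have hh : (↑hu1.unit⁻¹ : ZMod (p^m)) * ↑hu1.unit = 1 := Units.inv_mul _
      rw [hu1.unit_spec] at hh
      exact hh.symm
    · have hu2 : IsUnit v.2 := (unimod_unit p m hp hm v hv).resolve_left hu1
      by_cases h0 : v.1 = 0
      · refine ⟨(0, 1), Or.inl rfl, hu2.unit⁻¹, ?_, ?_⟩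
        · show (0 : ZMod (p^m)) = ↑hu2.unit⁻¹ * v.1
          rw [h0, mul_zero]
        · show (1 : ZMod (p^m)) = ↑hu2.unit⁻¹ * v.2
          have hh : (↑hu2.unit⁻¹ : ZMod (p^m)) * ↑hu2.unit = 1 := Units.inv_mul _
          rw [hu2.unit_spec] at hh
          exact hh.symm
      · obtain ⟨i, c, hi1, hi2, hcp, hac⟩ := decomp p m hp hm v.1 h0 hu1
        have hcu : IsUnit ((c : ℕ) : ZMod (p^m)) := isUnit_coprime p m c hp hcp
        set cu := hcu.unit with hcu'
        set bu := hu2.unit with hbu'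
        set d : (ZMod (p^m))ˣ := cu⁻¹ * bu with hd
        set r := (↑d : ZMod (p^m)).val % p^(m-i) with hr
        have hmi : 1 ≤ m - i := by omega
        have hdco : Nat.Coprime (↑d : ZMod (p^m)).val (p^m) := ZMod.val_coe_unit_coprime d
        have hpr : ¬ p ∣ r := by
          intro hdvd
          have hpdv : p ∣ (↑d : ZMod (p^m)).val := by
            have hdm := Nat.div_add_mod (↑d : ZMod (p^m)).val (p^(m-i))
            rw [← hdm, ← hr]
            exact Nat.dvd_add (Dvd.dvd.mul_right
              (dvd_pow_self p (Nat.one_le_iff_ne_zero.mp hmi)) _) hdvd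
          have hp1 : p ∣ 1 := hdco ▸ Nat.dvd_gcd hpdv
            (dvd_pow_self p (Nat.one_le_iff_ne_zero.mp hm))
          have := Nat.le_of_dvd one_pos hp1
          have := hp.one_lt
          omega
        have hr1 : 1 ≤ r := by
          rcases Nat.eq_zero_or_pos r with h | h
          · exact (hpr (by rw [h]; exact dvd_zero p)).elim
          · exact h
        have hrlt : r < p^(m-i) := Nat.mod_lt _ (pow_pos hp.pos _)
        have hrc : Nat.Coprime r p := ((Nat.Prime.coprime_iff_not_dvd hp).mpr hpr).symm
        have hru : IsUnit ((r : ℕ) : ZMod (p^m)) := isUnit_coprime p m r hp hrc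
        set u : (ZMod (p^m))ˣ := hru.unit * bu⁻¹ with hu
        have hrd : (p : ZMod (p^m))^i * (↑d : ZMod (p^m))
            = (p : ZMod (p^m))^i * ((r : ℕ) : ZMod (p^m)) := by
          conv_lhs => rw [← ZMod.natCast_zmod_val (↑d : ZMod (p^m)),
            ← Nat.div_add_mod (↑d : ZMod (p^m)).val (p^(m-i)), ← hr]
          push_cast
          rw [mul_add, ← mul_assoc, ← pow_add, show i + (m-i) = m by omega,
            (pow_p_eq_zero_iff p m hp m).mpr le_rfl, zero_mul, zero_add]
        refine ⟨((p : ZMod (p^m))^i, ((r : ℕ) : ZMod (p^m))),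
          Or.inr (Or.inr ⟨i, r, hi1, hi2, hr1, hrlt.le, hrc, rfl, rfl⟩), u, ?_, ?_⟩
        · show (p : ZMod (p^m))^i = ↑u * v.1
          have hd' : (bu⁻¹ * cu : (ZMod (p^m))ˣ) = d⁻¹ := by
            rw [hd, mul_inv_rev, inv_inv]
          rw [hac, show ((c : ℕ) : ZMod (p^m)) = ↑cu from hcu.unit_spec.symm, hu,
            Units.val_mul,
            show (↑hru.unit * ↑bu⁻¹ : ZMod (p^m)) * ((p : ZMod (p^m))^i * ↑cu)
              = ((p : ZMod (p^m))^i * ↑hru.unit) * (↑bu⁻¹ * ↑cu) by ring,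
            ← Units.val_mul bu⁻¹ cu, hd', hru.unit_spec, ← hrd, mul_assoc,
            Units.mul_inv, mul_one]
        · show ((r : ℕ) : ZMod (p^m)) = ↑u * v.2
          rw [hu, show v.2 = ↑bu from hu2.unit_spec.symm, Units.val_mul, mul_assoc,
            Units.inv_mul, mul_one, hru.unit_spec]
  obtain ⟨w, hrep, u, h1, h2⟩ := hex
  refine ⟨w, ⟨hrep, u, h1, h2⟩, ?_⟩
  rintro y ⟨hyrep, uy, hy1, hy2⟩
  have hw1 : v.1 = ↑u⁻¹ * w.1 := by rw [h1, Units.inv_mul_cancel_left]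
  have hw2 : v.2 = ↑u⁻¹ * w.2 := by rw [h2, Units.inv_mul_cancel_left]
  refine rep_unique p m hp hm w y hrep hyrep (uy * u⁻¹) ?_ ?_
  · rw [hy1, hw1, Units.val_mul, mul_assoc]
  · rw [hy2, hw2, Units.val_mul, mul_assoc]
end

section
/- Let Γ = PSL₂(ℤ) act on the upper half-plane ℍ by Möbius transformations, and let r be the hyperbolic geodesic segment joining i and e^{πi/3}. If g ∈ Γ satisfies g·r ∩ r ≠ ∅ and g ≠ 1, then g·r ∩ r ⊆ {i, e^{πi/3}}; moreover if g·i = i then g ∈ ⟨S⟩ and if g·e^{πi/3} = e^{πi/3} then g ∈ ⟨U⟩, where S = [[0,-1],[1,0]] and U = [[0,1],[-1,1]]. -/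
open Matrix UpperHalfPlane
open scoped MatrixGroups

/-- The matrix `S = [[0,-1],[1,0]]` in `SL₂(ℤ)`. -/
def matS : SL(2, ℤ) := ⟨!![0, -1; 1, 0], by norm_num [Matrix.det_fin_two_of]⟩

/-- The matrix `U = [[0,1],[-1,1]]` in `SL₂(ℤ)`. -/
def matU : SL(2, ℤ) := ⟨!![0, 1; -1, 1], by norm_num [Matrix.det_fin_two_of]⟩

/-- The point `e^{πi/3} = 1/2 + i√3/2` of the upper half-plane. -/
noncomputable def rho : ℍ := ⟨⟨1/2, Real.sqrt 3 / 2⟩, by norm_num [Real.sqrt_pos]⟩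

/-- The hyperbolic geodesic segment joining `i` and `e^{πi/3}`: the arc of the unit circle
with real part between `0` and `1/2`. -/
noncomputable def seg : Set ℍ := {z : ℍ | ‖(z : ℂ)‖ = 1 ∧ 0 ≤ z.re ∧ z.re ≤ 1/2}

/-! ### Auxiliary lemmas -/

lemma denom_ne' (g : SL(2,ℤ)) (z : ℍ) : ((g 1 0 : ℂ) * z + g 1 1) ≠ 0 := by
  intro h
  have him : (g 1 0 : ℝ) * z.im = 0 := by
    have := congrArg Complex.im h
    simpa [UpperHalfPlane.coe_im] using this
  have hc : (g 1 0 : ℝ) = 0 := by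
    rcases mul_eq_zero.mp him with h' | h'
    · exact h'
    · exact absurd h' (ne_of_gt z.im_pos)
  have hc' : g 1 0 = 0 := by exact_mod_cast hc
  have hre : (g 1 0 : ℝ) * z.re + g 1 1 = 0 := by
    have := congrArg Complex.re h
    simpa [UpperHalfPlane.coe_re] using this
  have hd : g 1 1 = 0 := by
    have h2 : (g 1 1 : ℝ) = 0 := by rw [hc] at hre; linarith
    exact_mod_cast h2
  have hdet := g.det_coe
  rw [Matrix.det_fin_two] at hdet
  simp [hc', hd] at hdet

lemma smul_coe' (g : SL(2,ℤ)) (z : ℍ) :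
    ((g • z : ℍ) : ℂ) = ((g 0 0 : ℤ) * (z:ℂ) + (g 0 1)) / ((g 1 0) * z + (g 1 1)) := by
  rw [UpperHalfPlane.specialLinearGroup_apply]
  simp only [UpperHalfPlane.coe_mk]
  norm_num

lemma smul_eq' (g : SL(2,ℤ)) (z w : ℍ) (h : g • z = w) :
    ((g 0 0 : ℂ) * z + g 0 1) = (w:ℂ) * ((g 1 0) * z + g 1 1) := by
  have hd := denom_ne' g z
  have h2 : ((g • z : ℍ) : ℂ) = (w : ℂ) := by rw [h]
  rw [smul_coe', div_eq_iff hd] at h2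
  exact h2

lemma smul_re_im (g : SL(2,ℤ)) (z w : ℍ) (h : g • z = w) :
    ((g 0 0 : ℝ) * z.re + g 0 1 = w.re * (g 1 0 * z.re + g 1 1) - w.im * (g 1 0 * z.im))
  ∧ ((g 0 0 : ℝ) * z.im = w.re * (g 1 0 * z.im) + w.im * (g 1 0 * z.re + g 1 1)) := by
  have h0 := smul_eq' g z w h
  rw [Complex.ext_iff] at h0
  obtain ⟨h1, h2⟩ := h0
  simp only [Complex.add_re, Complex.add_im, Complex.mul_re, Complex.mul_im,
    Complex.intCast_re, Complex.intCast_im, UpperHalfPlane.coe_re, UpperHalfPlane.coe_im] at h1 h2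
  constructor <;> linarith

lemma pair_enum (c d : ℤ) (h : c^2 + c*d + d^2 ≤ 1) (h0 : c ≠ 0 ∨ d ≠ 0) :
    (c = 0 ∧ d = 1) ∨ (c = 0 ∧ d = -1) ∨ (c = 1 ∧ d = 0) ∨ (c = -1 ∧ d = 0) ∨
    (c = 1 ∧ d = -1) ∨ (c = -1 ∧ d = 1) := by
  have hd1 : d ≤ 1 := by nlinarith [sq_nonneg (2*c+d), sq_nonneg (d-1)]
  have hd2 : -1 ≤ d := by nlinarith [sq_nonneg (2*c+d), sq_nonneg (d+1)]
  have hc1 : c ≤ 1 := by nlinarith [sq_nonneg (c+2*d), sq_nonneg (c-1)]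
  have hc2 : -1 ≤ c := by nlinarith [sq_nonneg (c+2*d), sq_nonneg (c+1)]
  interval_cases c <;> interval_cases d <;> omega

set_option maxHeartbeats 2000000 in
lemma key (a b c d : ℤ) (x y u v : ℝ)
    (hdet : a*d - b*c = 1)
    (hz : x^2+y^2 = 1) (hw : u^2+v^2 = 1) (hy : 0 < y) (hv : 0 < v)
    (hx0 : 0 ≤ x) (hx1 : x ≤ 1/2) (hu0 : 0 ≤ u) (hu1 : u ≤ 1/2)
    (hre : (a:ℝ)*x + b = u*((c:ℝ)*x+d) - v*((c:ℝ)*y))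
    (him : (a:ℝ)*y = u*((c:ℝ)*y) + v*((c:ℝ)*x+d)) :
    ((a = 1 ∧ b = 0 ∧ c = 0 ∧ d = 1) ∨ (a = -1 ∧ b = 0 ∧ c = 0 ∧ d = -1)) ∨
      u = 0 ∨ u = 1/2 := by
  have hdetR : (a:ℝ)*d - b*c = 1 := by exact_mod_cast hdet
  have hn : v * (((c:ℝ)*x+d)^2 + ((c:ℝ)*y)^2) = y := by
    linear_combination ((c:ℝ)*y) * hre - ((c:ℝ)*x+d) * him + y * hdetR
  have hm : ((a:ℝ)*x+b)^2 + ((a:ℝ)*y)^2 = ((c:ℝ)*x+d)^2 + ((c:ℝ)*y)^2 := by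
    linear_combination ((a:ℝ)*x + b + (u*((c:ℝ)*x+d) - v*((c:ℝ)*y))) * hre +
      ((a:ℝ)*y + (u*((c:ℝ)*y) + v*((c:ℝ)*x+d))) * him +
      (((c:ℝ)*x+d)^2 + ((c:ℝ)*y)^2) * hw
  have hn2 : v * ((c:ℝ)^2 + d^2 + 2*c*d*x) = y := by
    linear_combination hn - v*(c:ℝ)^2*hz
  have hm2 : (a:ℝ)^2 + b^2 + 2*a*b*x = (c:ℝ)^2 + d^2 + 2*c*d*x := by
    linear_combination hm + ((c:ℝ)^2 - (a:ℝ)^2)*hz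
  have hNpos : 0 < (c:ℝ)^2 + d^2 + 2*c*d*x := by nlinarith
  have hv2 : v^2 = 1 - u^2 := by linarith
  have hy2 : y^2 = 1 - x^2 := by linarith
  have h1 : (1-u^2) * ((c:ℝ)^2 + d^2 + 2*c*d*x)^2 = 1 - x^2 := by
    rw [← hv2, ← hy2]; linear_combination (v*((c:ℝ)^2 + d^2 + 2*c*d*x) + y) * hn2
  have hu2 : u^2 ≤ 1/4 := by nlinarith
  have hN43 : 3 * ((c:ℝ)^2 + d^2 + 2*c*d*x)^2 ≤ 4 := by
    nlinarith [h1, hu2, sq_nonneg x]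
  have hN2 : (c:ℝ)^2 + d^2 + 2*c*d*x < 2 := by nlinarith
  have hcd : c^2 + c*d + d^2 ≤ 1 := by
    rcases le_or_gt 0 (c*d) with h' | h'
    · have h'' : (0:ℝ) ≤ (c:ℝ)*d := by exact_mod_cast h'
      have h2 : ((c:ℝ)^2 + d^2) < 2 := by nlinarith
      have h3 : c^2 + d^2 ≤ 1 := by
        have : (c^2 + d^2 : ℤ) < 2 := by exact_mod_cast (by push_cast; linarith : ((c^2+d^2 : ℤ):ℝ) < 2)
        omega
      nlinarith
    · have h'' : (c:ℝ)*d < 0 := by exact_mod_cast h'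
      have h2 : ((c:ℝ)^2 + c*d + d^2) < 2 := by nlinarith
      have : (c^2 + c*d + d^2 : ℤ) < 2 := by
        exact_mod_cast (by push_cast; linarith : ((c^2+c*d+d^2 : ℤ):ℝ) < 2)
      omega
  have hab : a^2 + a*b + b^2 ≤ 1 := by
    rcases le_or_gt 0 (a*b) with h' | h'
    · have h'' : (0:ℝ) ≤ (a:ℝ)*b := by exact_mod_cast h'
      have h2 : ((a:ℝ)^2 + b^2) < 2 := by nlinarith
      have h3 : a^2 + b^2 ≤ 1 := by
        have : (a^2 + b^2 : ℤ) < 2 := by exact_mod_cast (by push_cast; linarith : ((a^2+b^2 : ℤ):ℝ) < 2)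
        omega
      nlinarith
    · have h'' : (a:ℝ)*b < 0 := by exact_mod_cast h'
      have h2 : ((a:ℝ)^2 + a*b + b^2) < 2 := by nlinarith
      have : (a^2 + a*b + b^2 : ℤ) < 2 := by
        exact_mod_cast (by push_cast; linarith : ((a^2+a*b+b^2 : ℤ):ℝ) < 2)
      omega
  have hcd0 : c ≠ 0 ∨ d ≠ 0 := by
    by_contra h'; push_neg at h'; obtain ⟨rfl, rfl⟩ := h'; simp at hdet
  have hab0 : a ≠ 0 ∨ b ≠ 0 := by
    by_contra h'; push_neg at h'; obtain ⟨rfl, rfl⟩ := h'; simp at hdet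
  clear hn hm h1 hN43 hN2 hNpos hu2 hdetR
  rcases pair_enum a b hab hab0 with ⟨rfl, rfl⟩|⟨rfl, rfl⟩|⟨rfl, rfl⟩|⟨rfl, rfl⟩|⟨rfl, rfl⟩|⟨rfl, rfl⟩ <;>
    rcases pair_enum c d hcd hcd0 with ⟨rfl, rfl⟩|⟨rfl, rfl⟩|⟨rfl, rfl⟩|⟨rfl, rfl⟩|⟨rfl, rfl⟩|⟨rfl, rfl⟩ <;>
    first
    | omega
    | (left; left; norm_num; done)
    | (left; right; norm_num; done)
    | (exfalso; norm_num at hre; linarith)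
    | (right; left
       norm_num at him
       have h1 : u ≤ 0 := by nlinarith [mul_nonneg hv.le hx0, hv, hy]
       linarith)
    | (right; right
       norm_num at hm2 hn2 him
       have hx : x = 1/2 := by linarith
       subst hx
       have hvy : v = y := by linarith
       have h2 : u * y = (1/2) * y := by linarith
       exact mul_right_cancel₀ (ne_of_gt hy) h2)
    | (exfalso
       norm_num at hm2 hn2 hre
       have hx : x = 1/2 := by linarith
       subst hx
       have hvy : v = y := by linarith
       subst hvy
       nlinarith [hz, hu0])

lemma neg_one_mem_center' : (-1 : SL(2,ℤ)) ∈ Subgroup.center (SL(2,ℤ)) := by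
  rw [Matrix.SpecialLinearGroup.mem_center_iff]
  exact ⟨-1, by norm_num, by ext i j; fin_cases i <;> fin_cases j <;> simp⟩

lemma mk_neg' (g : SL(2,ℤ)) : (QuotientGroup.mk (-g) : PSL(2,ℤ)) = QuotientGroup.mk g := by
  have h : -g = g * (-1) := by ext i j; simp
  rw [h, QuotientGroup.mk_mul,
    (QuotientGroup.eq_one_iff (-1 : SL(2,ℤ))).mpr neg_one_mem_center', mul_one]

lemma mk_one_iff' (g : SL(2,ℤ)) : (QuotientGroup.mk g : PSL(2,ℤ)) = 1 ↔ g = 1 ∨ g = -1 := by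
  rw [QuotientGroup.eq_one_iff, Matrix.SpecialLinearGroup.mem_center_iff]
  constructor
  · rintro ⟨r, hr, hg⟩
    have hr2 : r ^ 2 = 1 := by simpa using hr
    have hr' : r = 1 ∨ r = -1 := by
      have : (r - 1) * (r + 1) = 0 := by linear_combination hr2
      rcases mul_eq_zero.mp this with h | h
      · left; linarith
      · right; linarith
    rcases hr' with rfl | rfl
    · left; ext i j; rw [← hg]; fin_cases i <;> fin_cases j <;> simp
    · right; ext i j; rw [← hg]; fin_cases i <;> fin_cases j <;> simp
  · rintro (rfl | rfl)
    · exact ⟨1, by norm_num, by ext i j; fin_cases i <;> fin_cases j <;> simp⟩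
    · exact ⟨-1, by norm_num, by ext i j; fin_cases i <;> fin_cases j <;> simp⟩

lemma seg_norm (w : ℍ) (h : ‖(w:ℂ)‖ = 1) : w.re^2 + w.im^2 = 1 := by
  have h' : Complex.normSq (w : ℂ) = 1 := by rw [← Complex.sq_norm, h]; norm_num
  simpa [Complex.normSq_apply, UpperHalfPlane.coe_re, UpperHalfPlane.coe_im, sq] using h'

lemma rho_re : rho.re = 1/2 := rfl
lemma rho_im : rho.im = Real.sqrt 3 / 2 := rfl

theorem stmt12 (g : SL(2, ℤ)) :
    (((QuotientGroup.mk g : PSL(2, ℤ)) ≠ 1) → ((g • ·) '' seg ∩ seg).Nonempty →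
      (g • ·) '' seg ∩ seg ⊆ {UpperHalfPlane.I, rho}) ∧
    (g • UpperHalfPlane.I = UpperHalfPlane.I →
      (QuotientGroup.mk g : PSL(2, ℤ)) ∈
        Subgroup.zpowers (QuotientGroup.mk matS : PSL(2, ℤ))) ∧
    (g • rho = rho →
      (QuotientGroup.mk g : PSL(2, ℤ)) ∈
        Subgroup.zpowers (QuotientGroup.mk matU : PSL(2, ℤ))) := by
  have hdet : g 0 0 * g 1 1 - g 0 1 * g 1 0 = 1 := by
    have := g.det_coe; rwa [Matrix.det_fin_two] at this
  refine ⟨?_, ?_, ?_⟩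
  · -- part 1
    intro hg _ w hw
    obtain ⟨⟨z, hzseg, rfl⟩, hwseg⟩ := hw
    obtain ⟨habs, hx0, hx1⟩ := hzseg
    obtain ⟨habs', hu0, hu1⟩ := hwseg
    have hz1 : z.re^2 + z.im^2 = 1 := seg_norm z habs
    have hw1 : (g • z).re^2 + (g • z).im^2 = 1 := seg_norm _ habs'
    obtain ⟨h1, h2⟩ := smul_re_im g z (g • z) rfl
    rcases key (g 0 0) (g 0 1) (g 1 0) (g 1 1) z.re z.im (g • z).re (g • z).im hdet hz1 hw1
        z.im_pos (g • z).im_pos hx0 hx1 hu0 hu1 h1 h2 with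
      (⟨ha, hb, hc, hd⟩ | ⟨ha, hb, hc, hd⟩) | hu | hu
    · exact absurd ((mk_one_iff' g).mpr (Or.inl (by
        ext i j; fin_cases i <;> fin_cases j <;> simp [ha, hb, hc, hd]))) hg
    · exact absurd ((mk_one_iff' g).mpr (Or.inr (by
        ext i j; fin_cases i <;> fin_cases j <;> simp [ha, hb, hc, hd]))) hg
    · left
      apply UpperHalfPlane.ext'
      · rw [hu, UpperHalfPlane.I_re]
      · rw [UpperHalfPlane.I_im]
        have hv2 : (g • z).im ^ 2 = 1 := by rw [hu] at hw1; linarith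
        have := Real.sqrt_sq (g • z).im_pos.le
        rw [hv2, Real.sqrt_one] at this
        linarith
    · right
      apply UpperHalfPlane.ext'
      · rw [hu, rho_re]
      · rw [rho_im]
        have hv2 : (g • z).im ^ 2 = (Real.sqrt 3 / 2) ^ 2 := by
          rw [div_pow, Real.sq_sqrt (by norm_num : (0:ℝ) ≤ 3)]
          rw [hu] at hw1; linarith
        have e1 := Real.sqrt_sq (g • z).im_pos.le
        have e2 := Real.sqrt_sq (by positivity : (0:ℝ) ≤ Real.sqrt 3 / 2)
        rw [← e1, hv2, e2]
  · -- part 2 : fixing i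
    intro h
    obtain ⟨h1, h2⟩ := smul_re_im g UpperHalfPlane.I UpperHalfPlane.I h
    rw [UpperHalfPlane.I_re, UpperHalfPlane.I_im] at h1 h2
    have hb : g 0 1 = - g 1 0 := by
      have : (g 0 1 : ℝ) = -(g 1 0) := by linarith
      exact_mod_cast this
    have had : g 0 0 = g 1 1 := by
      have : (g 0 0 : ℝ) = g 1 1 := by linarith
      exact_mod_cast this
    have hsum : g 0 0 ^ 2 + g 1 0 ^ 2 = 1 := by
      linear_combination hdet + g 0 0 * had + g 1 0 * hb
    have ha1 : g 0 0 ≤ 1 := by nlinarith [sq_nonneg (g 0 0 - 1), sq_nonneg (g 1 0)]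
    have ha2 : -1 ≤ g 0 0 := by nlinarith [sq_nonneg (g 0 0 + 1), sq_nonneg (g 1 0)]
    have hc1 : g 1 0 ≤ 1 := by nlinarith [sq_nonneg (g 1 0 - 1), sq_nonneg (g 0 0)]
    have hc2 : -1 ≤ g 1 0 := by nlinarith [sq_nonneg (g 1 0 + 1), sq_nonneg (g 0 0)]
    have hcases : (g 0 0 = 1 ∧ g 1 0 = 0) ∨ (g 0 0 = -1 ∧ g 1 0 = 0) ∨
        (g 0 0 = 0 ∧ g 1 0 = 1) ∨ (g 0 0 = 0 ∧ g 1 0 = -1) := by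
      interval_cases h00 : g 0 0 <;> interval_cases h10 : g 1 0 <;> omega
    rcases hcases with ⟨e1, e2⟩ | ⟨e1, e2⟩ | ⟨e1, e2⟩ | ⟨e1, e2⟩ <;>
      [ (have eb : g 0 1 = 0 := by omega); (have eb : g 0 1 = 0 := by omega);
        (have eb : g 0 1 = -1 := by omega); (have eb : g 0 1 = 1 := by omega)] <;>
      [ (have ed : g 1 1 = 1 := by omega); (have ed : g 1 1 = -1 := by omega);
        (have ed : g 1 1 = 0 := by omega); (have ed : g 1 1 = 0 := by omega)]
    · have : g = 1 := by
        ext i j; fin_cases i <;> fin_cases j <;> simp [e1, e2, eb, ed]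
      rw [this, QuotientGroup.mk_one]; exact Subgroup.one_mem _
    · have : g = -1 := by
        ext i j; fin_cases i <;> fin_cases j <;> simp [e1, e2, eb, ed]
      rw [this, mk_neg', QuotientGroup.mk_one]; exact Subgroup.one_mem _
    · have : g = matS := by
        ext i j; fin_cases i <;> fin_cases j <;> simp [matS, e1, e2, eb, ed]
      rw [this]; exact Subgroup.mem_zpowers _
    · have : g = -matS := by
        ext i j; rw [Matrix.SpecialLinearGroup.coe_neg]; fin_cases i <;> fin_cases j <;> simp [matS, e1, e2, eb, ed]
      rw [this, mk_neg']; exact Subgroup.mem_zpowers _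
  · -- part 3 : fixing rho
    intro h
    obtain ⟨h1, h2⟩ := smul_re_im g rho rho h
    rw [rho_re, rho_im] at h1 h2
    have hs : Real.sqrt 3 ^ 2 = 3 := Real.sq_sqrt (by norm_num)
    have hspos : 0 < Real.sqrt 3 := Real.sqrt_pos.mpr (by norm_num)
    have hac : (g 0 0 : ℝ) = g 1 0 + g 1 1 := by
      have h2' : (g 0 0 : ℝ) * (Real.sqrt 3 / 2) = ((g 1 0 : ℝ) + g 1 1) * (Real.sqrt 3 / 2) := by
        linear_combination h2
      exact mul_right_cancel₀ (by positivity) h2'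
    have ha : g 0 0 = g 1 0 + g 1 1 := by exact_mod_cast hac
    have hbc : (g 0 1 : ℝ) = -(g 1 0) := by
      linear_combination h1 - (g 1 0 : ℝ)/4 * hs - (1/2) * hac
    have hb : g 0 1 = -(g 1 0) := by exact_mod_cast hbc
    have hqd : g 1 0 ^2 + g 1 0 * g 1 1 + g 1 1 ^2 = 1 := by
      linear_combination hdet - g 1 1 * ha + g 1 0 * hb
    have hne : g 1 0 ≠ 0 ∨ g 1 1 ≠ 0 := by
      by_contra h'; push_neg at h'; rw [h'.1, h'.2] at hqd; simp at hqd
    have hmm : (matU * matU : SL(2,ℤ)) = ⟨!![-1, 1; -1, 0], by norm_num [Matrix.det_fin_two_of]⟩ := by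
      ext i' j'; simp only [Matrix.SpecialLinearGroup.coe_mul]; fin_cases i' <;> fin_cases j' <;>
        simp [matU, Matrix.mul_apply, Fin.sum_univ_two, Matrix.SpecialLinearGroup.coe_mk]
    rcases pair_enum (g 1 0) (g 1 1) hqd.le hne with
      ⟨e1, e2⟩ | ⟨e1, e2⟩ | ⟨e1, e2⟩ | ⟨e1, e2⟩ | ⟨e1, e2⟩ | ⟨e1, e2⟩ <;>
      (have ea : g 0 0 = g 1 0 + g 1 1 := ha) <;>
      (have eb : g 0 1 = -g 1 0 := hb)
    · have : g = 1 := by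
        ext i j; fin_cases i <;> fin_cases j <;>
          simp [e1, e2, show g 0 1 = 0 by omega, show g 0 0 = 1 by omega]
      rw [this, QuotientGroup.mk_one]; exact Subgroup.one_mem _
    · have : g = -1 := by
        ext i j; fin_cases i <;> fin_cases j <;>
          simp [e1, e2, show g 0 1 = 0 by omega, show g 0 0 = -1 by omega]
      rw [this, mk_neg', QuotientGroup.mk_one]; exact Subgroup.one_mem _
    · -- c=1 d=0 : -U^2
      have hgU : g = -(matU * matU) := by
        rw [hmm]
        ext i j; show g i j = -(!![-1, 1; -1, 0] i j); fin_cases i <;> fin_cases j <;>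
          simp [e1, e2, show g 0 1 = -1 by omega, show g 0 0 = 1 by omega]
      rw [hgU, mk_neg', show matU * matU = matU ^ 2 from (pow_two matU).symm,
        QuotientGroup.mk_pow]
      exact pow_mem (Subgroup.mem_zpowers _) 2
    · -- c=-1 d=0 : U^2
      have hgU : g = matU * matU := by
        rw [hmm]
        ext i j; fin_cases i <;> fin_cases j <;>
          simp [e1, e2, show g 0 1 = 1 by omega, show g 0 0 = -1 by omega]
      rw [hgU, show matU * matU = matU ^ 2 from (pow_two matU).symm, QuotientGroup.mk_pow]
      exact pow_mem (Subgroup.mem_zpowers _) 2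
    · -- c=1 d=-1 : -U
      have hgU : g = -matU := by
        ext i j; rw [Matrix.SpecialLinearGroup.coe_neg]; fin_cases i <;> fin_cases j <;>
          simp [matU, e1, e2, show g 0 1 = -1 by omega, show g 0 0 = 0 by omega]
      rw [hgU, mk_neg']; exact Subgroup.mem_zpowers _
    · -- c=-1 d=1 : U
      have hgU : g = matU := by
        ext i j; fin_cases i <;> fin_cases j <;>
          simp [matU, e1, e2, show g 0 1 = 1 by omega, show g 0 0 = 0 by omega]
      rw [hgU]; exact Subgroup.mem_zpowers _
end
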